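/- arXiv:1506.08906 — 2 statements merged into one kernel-verified Lean document; each statement's English description precedes it below -/
import Mathlib

section
/- Let G be a finite directed graph and let G₁, G₂ be subgraphs of G (with vertex sets V₁, V₂ and edge sets E₁, E₂ satisfying s(E_i) ⊆ V_i and r(E_i) ⊆ V_i) such that V(G) = V₁ ∪ V₂ and E(G) = E₁ ∪ E₂, and let Γ be the common subgraph with V(Γ) = V₁ ∩ V₂ and E(Γ) = E₁ ∩ E₂. Assume that every vertex of V(Γ) is a sink in G₁ if and only if it is a sink in G₂. Let (g₁, λ₁) and (g₂, λ₂) be faithful graph weights on G₁ and G₂ respectively. Define g : V(G) → ℝ by g(v) = g₁(v) for v ∈ V₁∖V(Γ), g(v) = g₂(v) for v ∈ V₂∖V(Γ), g(v) = g₁(v) + g₂(v) for v ∈ V(Γ); and define λ : E(G) → ℝ by λ(e) = λ₁(e) if e ∈ E₁∖E(Γ) and r(e) ∈ V₁∖V(Γ); λ(e) = λ₂(e) if e ∈ E₂∖E(Γ) and r(e) ∈ V₂∖V(Γ); λ(e) = λ₁(e)·g₁(r(e)) / (g₁(r(e)) + g₂(r(e))) if e ∈ E₁∖E(Γ) and r(e)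 ∈ V(Γ); λ(e) = λ₂(e)·g₂(r(e)) / (g₁(r(e)) + g₂(r(e))) if e ∈ E₂∖E(Γ) and r(e) ∈ V(Γ); λ(e) = (λ₁(e)·g₁(r(e)) + λ₂(e)·g₂(r(e))) / (g₁(r(e)) + g₂(r(e))) if e ∈ E(Γ). Then (g, λ) is a faithful graph weight on G. -/
/-- splicing of faithful graph weights: Let `G` be a finite directed graph
covered by two subgraphs `G₁ = (V₁, E₁)`, `G₂ = (V₂, E₂)` (each closed under source and
range), with common subgraph `Γ = (V₁ ∩ V₂, E₁ ∩ E₂)`. Assume a vertex of `Γ` is a sink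
in `G₁` iff it is a sink in `G₂`. Given faithful graph weights `(g₁, λ₁)` on `G₁` and
`(g₂, λ₂)` on `G₂`, the spliced pair `(g, λ)` defined by the case formulas is a faithful
graph weight on `G`. -/
theorem splice_faithful_graph_weights
    {V Edge : Type*} [Fintype V] [Fintype Edge] [DecidableEq V] [DecidableEq Edge]
    (s rng : Edge → V)
    (V₁ V₂ : Finset V) (E₁ E₂ : Finset Edge)
    (hVcover : ∀ v : V, v ∈ V₁ ∨ v ∈ V₂)
    (hEcover : ∀ e : Edge, e ∈ E₁ ∨ e ∈ E₂)
    (hE₁s : ∀ e ∈ E₁, s e ∈ V₁) (hE₁r : ∀ e ∈ E₁, rng e ∈ V₁)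
    (hE₂s : ∀ e ∈ E₂, s e ∈ V₂) (hE₂r : ∀ e ∈ E₂, rng e ∈ V₂)
    (hsink : ∀ v ∈ V₁ ∩ V₂, ((∃ e ∈ E₁, s e = v) ↔ (∃ e ∈ E₂, s e = v)))
    (g₁ g₂ : V → ℝ) (lam₁ lam₂ : Edge → ℝ)
    (hg₁pos : ∀ v ∈ V₁, 0 < g₁ v) (hg₂pos : ∀ v ∈ V₂, 0 < g₂ v)
    (hlam₁pos : ∀ e ∈ E₁, 0 < lam₁ e) (hlam₂pos : ∀ e ∈ E₂, 0 < lam₂ e)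
    (hw₁ : ∀ v ∈ V₁, (∃ e ∈ E₁, s e = v) →
      g₁ v = ∑ e ∈ E₁.filter (fun e => s e = v), lam₁ e * g₁ (rng e))
    (hw₂ : ∀ v ∈ V₂, (∃ e ∈ E₂, s e = v) →
      g₂ v = ∑ e ∈ E₂.filter (fun e => s e = v), lam₂ e * g₂ (rng e))
    (g : V → ℝ) (lam : Edge → ℝ)
    (hg : ∀ v : V, g v =
      if v ∈ V₁ ∧ v ∈ V₂ then g₁ v + g₂ v
      else if v ∈ V₁ then g₁ v else g₂ v)
    (hlam : ∀ e : Edge, lam e =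
      if e ∈ E₁ ∧ e ∈ E₂ then
        (lam₁ e * g₁ (rng e) + lam₂ e * g₂ (rng e)) / (g₁ (rng e) + g₂ (rng e))
      else if e ∈ E₁ then
        (if rng e ∈ V₂ then lam₁ e * g₁ (rng e) / (g₁ (rng e) + g₂ (rng e)) else lam₁ e)
      else
        (if rng e ∈ V₁ then lam₂ e * g₂ (rng e) / (g₁ (rng e) + g₂ (rng e)) else lam₂ e)) :
    (∀ v : V, 0 < g v) ∧ (∀ e : Edge, 0 < lam e) ∧
      ∀ v : V, (∃ e : Edge, s e = v) →
        g v = ∑ e ∈ Finset.univ.filter (fun e : Edge => s e = v), lam e * g (rng e) := by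

  have gpos : ∀ v : V, 0 < g v := by
    intro v
    rw [hg v]
    rcases hVcover v with h1 | h2
    · by_cases h2 : v ∈ V₂
      · simp only [h1, h2, and_self, if_true]
        exact add_pos (hg₁pos v h1) (hg₂pos v h2)
      · simp only [h1, h2, and_false, if_false, if_true]
        exact hg₁pos v h1
    · by_cases h1 : v ∈ V₁
      · simp only [h1, h2, and_self, if_true]
        exact add_pos (hg₁pos v h1) (hg₂pos v h2)
      · simp only [h1, h2, false_and, if_false]
        exact hg₂pos v h2
  have lampos : ∀ e : Edge, 0 < lam e := by
    intro e
    rw [hlam e]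
    by_cases h1 : e ∈ E₁ <;> by_cases h2 : e ∈ E₂
    · have hr1 := hE₁r e h1; have hr2 := hE₂r e h2
      simp only [h1, h2, and_self, if_true]
      exact div_pos (add_pos (mul_pos (hlam₁pos e h1) (hg₁pos _ hr1))
        (mul_pos (hlam₂pos e h2) (hg₂pos _ hr2)))
        (add_pos (hg₁pos _ hr1) (hg₂pos _ hr2))
    · have hr1 := hE₁r e h1
      simp only [h1, h2, and_false, if_false, if_true]
      by_cases hv2 : rng e ∈ V₂
      · simp only [hv2, if_true]
        exact div_pos (mul_pos (hlam₁pos e h1) (hg₁pos _ hr1))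
          (add_pos (hg₁pos _ hr1) (hg₂pos _ hv2))
      · simp only [hv2, if_false]
        exact hlam₁pos e h1
    · have hr2 := hE₂r e h2
      simp only [h1, h2, false_and, if_false]
      by_cases hv1 : rng e ∈ V₁
      · simp only [hv1, if_true]
        exact div_pos (mul_pos (hlam₂pos e h2) (hg₂pos _ hr2))
          (add_pos (hg₁pos _ hv1) (hg₂pos _ hr2))
      · simp only [hv1, if_false]
        exact hlam₂pos e h2
    · exact absurd (hEcover e) (by simp [h1, h2])
  refine ⟨gpos, lampos, ?_⟩
  have key : ∀ e : Edge, lam e * g (rng e) =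
      (if e ∈ E₁ then lam₁ e * g₁ (rng e) else 0) +
      (if e ∈ E₂ then lam₂ e * g₂ (rng e) else 0) := by
    intro e
    rw [hlam e, hg (rng e)]
    by_cases h1 : e ∈ E₁ <;> by_cases h2 : e ∈ E₂
    · have hr1 := hE₁r e h1; have hr2 := hE₂r e h2
      have hpos : 0 < g₁ (rng e) + g₂ (rng e) := add_pos (hg₁pos _ hr1) (hg₂pos _ hr2)
      simp only [h1, h2, and_self, if_true, hr1, hr2]
      field_simp
    · have hr1 := hE₁r e h1
      simp only [h1, h2, and_false, if_false, if_true, and_true, add_zero]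
      by_cases hv2 : rng e ∈ V₂
      · have hpos : 0 < g₁ (rng e) + g₂ (rng e) := add_pos (hg₁pos _ hr1) (hg₂pos _ hv2)
        simp only [hv2, if_true, hr1, and_self]
        field_simp
      · simp only [hv2, if_false, hr1, and_false, if_true]
    · have hr2 := hE₂r e h2
      simp only [h1, h2, false_and, if_false, if_true, zero_add]
      by_cases hv1 : rng e ∈ V₁
      · have hpos : 0 < g₁ (rng e) + g₂ (rng e) := add_pos (hg₁pos _ hv1) (hg₂pos _ hr2)
        simp only [hv1, if_true, hr2, and_self]
        field_simp
      · simp only [hv1, if_false, hr2, false_and]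
    · exact absurd (hEcover e) (by simp [h1, h2])
  intro v ⟨e0, he0⟩
  have split : ∀ (E : Finset Edge) (f : Edge → ℝ),
      (∑ e ∈ Finset.univ.filter (fun e : Edge => s e = v),
        (if e ∈ E then f e else 0)) = ∑ e ∈ E.filter (fun e => s e = v), f e := by
    intro E f
    rw [Finset.sum_ite_mem]
    congr 1
    ext e
    simp [and_comm]
  have sumeq : (∑ e ∈ Finset.univ.filter (fun e : Edge => s e = v), lam e * g (rng e)) =
      (∑ e ∈ E₁.filter (fun e => s e = v), lam₁ e * g₁ (rng e)) +
      (∑ e ∈ E₂.filter (fun e => s e = v), lam₂ e * g₂ (rng e)) := by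
    rw [← split E₁ (fun e => lam₁ e * g₁ (rng e)), ← split E₂ (fun e => lam₂ e * g₂ (rng e)),
      ← Finset.sum_add_distrib]
    exact Finset.sum_congr rfl fun e _ => key e
  rw [sumeq, hg v]
  rcases hEcover e0 with he1 | he2
  · have hv1 : v ∈ V₁ := he0 ▸ hE₁s e0 he1
    by_cases hv2 : v ∈ V₂
    · have hex1 : ∃ e ∈ E₁, s e = v := ⟨e0, he1, he0⟩
      have hex2 : ∃ e ∈ E₂, s e = v := (hsink v (Finset.mem_inter.mpr ⟨hv1, hv2⟩)).mp hex1
      simp only [hv1, hv2, and_self, if_true]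
      rw [hw₁ v hv1 hex1, hw₂ v hv2 hex2]
    · simp only [hv1, hv2, and_false, if_false, if_true]
      have h2empty : E₂.filter (fun e => s e = v) = ∅ := by
        rw [Finset.filter_eq_empty_iff]
        intro e he hse
        exact hv2 (hse ▸ hE₂s e he)
      rw [h2empty, Finset.sum_empty, add_zero]
      exact hw₁ v hv1 ⟨e0, he1, he0⟩
  · have hv2 : v ∈ V₂ := he0 ▸ hE₂s e0 he2
    by_cases hv1 : v ∈ V₁
    · have hex2 : ∃ e ∈ E₂, s e = v := ⟨e0, he2, he0⟩
      have hex1 : ∃ e ∈ E₁, s e = v := (hsink v (Finset.mem_inter.mpr ⟨hv1, hv2⟩)).mpr hex2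
      simp only [hv1, hv2, and_self, if_true]
      rw [hw₁ v hv1 hex1, hw₂ v hv2 hex2]
    · simp only [hv1, hv2, false_and, if_false]
      have h1empty : E₁.filter (fun e => s e = v) = ∅ := by
        rw [Finset.filter_eq_empty_iff]
        intro e he hse
        exact hv1 (hse ▸ hE₁s e he)
      rw [h1empty, Finset.sum_empty, zero_add]
      exact hw₂ v hv2 ⟨e0, he2, he0⟩
end

section
/- Let B be an oriented finite 2-dimensional CW complex that is the union of two subcomplexes B₁ and B₂ (each closed under the source, range and boundary-word maps) with common intersection subcomplex Δ. Assume that every vertex of Δ is a sink in the 1-skeleton of B₁ if and only if it is a sink in the 1-skeleton of B₂, and that every edge of Δ, viewed as a vertex of the boundary graphs, is a sink in (B₁)_∂ if and only if it is a sink in (B₂)_∂. Let (g₁, λ̃₁, λ₁, η₁) and (g₂, λ̃₂, λ₂, η₂) be faithful 2D CW weights on B₁ and B₂ respectively (so (g_i, λ̃_i) is a faithful graph weight on the 1-skeleton of B_i, (λ_i, η_i) is a faithful graph weight on the boundary graph (B_i)_∂ with boundary-graph edge weight η_i(σ) on the edge of (B_i)_∂ coming from face σ, and λ_i(e) = λ̃_i(e)·g_i(r(e))).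 Define g and λ̃ by splicing (g₁,λ̃₁) and (g₂,λ̃₂) along the 1-skeleton of Δ, define λ by λ(e) = λ₁(e) on edges of B₁ not in Δ, λ(e) = λ₂(e) on edges of B₂ not in Δ, and λ(e) = λ₁(e) + λ₂(e) on edges of Δ, and define the boundary-graph edge weight η̂ by splicing the boundary-graph weights (λ₁, η₁) and (λ₂, η₂) along the boundary graph of Δ. Then (g, λ̃) is a faithful graph weight on the 1-skeleton of B, (λ, η̂) is a faithful graph weight on the boundary graph B_∂, and λ(e) = λ̃(e)·g(r(e)) for every edge e of B. -/
/-- splicing of faithful 2D CW weights: Let `B` be an oriented finite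
2-dimensional CW complex (vertices `V`, edges `Ed` with source/range `s`, `rng`, faces `F`;
the boundary graph `B_∂` has vertex set `Ed` and one edge `b : BE` for each consecutive
occurrence, with source `bs b`, range `br b`, face `fc b`, and `rng (bs b) = s (br b)`),
which is the union of two subcomplexes `B₁ = (V₁, E₁, F₁)` and `B₂ = (V₂, E₂, F₂)` (each
closed under source, range, and boundary-word maps) with intersection subcomplex `Δ`.
Assume the sink-compatibility conditions on `Δ` for the 1-skeleta and the boundary graphs.
Given faithful 2D CW weights `(g₁, λ̃₁, λ₁, η₁)` on `B₁` and `(g₂, λ̃₂, λ₂, η₂)` on `B₂`,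
the spliced `(g, λ̃)` is a faithful graph weight on the 1-skeleton of `B`, the spliced
`(λ, η̂)` is a faithful graph weight on the boundary graph `B_∂`, and
`λ(e) = λ̃(e)·g(r(e))` for every edge `e`. -/
theorem splice_faithful_2D_CW_weights
    {V Ed F BE : Type*} [Fintype V] [Fintype Ed] [Fintype F] [Fintype BE]
    [DecidableEq V] [DecidableEq Ed] [DecidableEq F]
    (s rng : Ed → V) (bs br : BE → Ed) (fc : BE → F)
    (hcyc : ∀ b : BE, rng (bs b) = s (br b))
    (V₁ V₂ : Finset V) (E₁ E₂ : Finset Ed) (F₁ F₂ : Finset F)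
    (hVcover : ∀ v : V, v ∈ V₁ ∨ v ∈ V₂)
    (hEcover : ∀ e : Ed, e ∈ E₁ ∨ e ∈ E₂)
    (hFcover : ∀ σ : F, σ ∈ F₁ ∨ σ ∈ F₂)
    (hE₁s : ∀ e ∈ E₁, s e ∈ V₁) (hE₁r : ∀ e ∈ E₁, rng e ∈ V₁)
    (hE₂s : ∀ e ∈ E₂, s e ∈ V₂) (hE₂r : ∀ e ∈ E₂, rng e ∈ V₂)
    (hF₁ : ∀ b : BE, fc b ∈ F₁ → bs b ∈ E₁ ∧ br b ∈ E₁)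
    (hF₂ : ∀ b : BE, fc b ∈ F₂ → bs b ∈ E₂ ∧ br b ∈ E₂)
    -- sink compatibility on the intersection subcomplex Δ, for the 1-skeleta:
    (hsink1 : ∀ v ∈ V₁ ∩ V₂, ((∃ e ∈ E₁, s e = v) ↔ (∃ e ∈ E₂, s e = v)))
    -- and for the boundary graphs:
    (hsinkBd : ∀ e ∈ E₁ ∩ E₂,
      ((∃ b : BE, fc b ∈ F₁ ∧ bs b = e) ↔ (∃ b : BE, fc b ∈ F₂ ∧ bs b = e)))
    -- the two faithful 2D CW weights:
    (g₁ g₂ : V → ℝ) (lt₁ lt₂ l₁ l₂ : Ed → ℝ) (et₁ et₂ : F → ℝ)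
    (hg₁pos : ∀ v ∈ V₁, 0 < g₁ v) (hg₂pos : ∀ v ∈ V₂, 0 < g₂ v)
    (hlt₁pos : ∀ e ∈ E₁, 0 < lt₁ e) (hlt₂pos : ∀ e ∈ E₂, 0 < lt₂ e)
    (hl₁pos : ∀ e ∈ E₁, 0 < l₁ e) (hl₂pos : ∀ e ∈ E₂, 0 < l₂ e)
    (het₁pos : ∀ σ ∈ F₁, 0 < et₁ σ) (het₂pos : ∀ σ ∈ F₂, 0 < et₂ σ)
    -- (gᵢ, λ̃ᵢ) is a graph weight on the 1-skeleton of Bᵢ: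
    (hw₁ : ∀ v ∈ V₁, (∃ e ∈ E₁, s e = v) →
      g₁ v = ∑ e ∈ E₁.filter (fun e => s e = v), lt₁ e * g₁ (rng e))
    (hw₂ : ∀ v ∈ V₂, (∃ e ∈ E₂, s e = v) →
      g₂ v = ∑ e ∈ E₂.filter (fun e => s e = v), lt₂ e * g₂ (rng e))
    -- (λᵢ, ηᵢ) is a graph weight on the boundary graph (Bᵢ)_∂:
    (hBdw₁ : ∀ e ∈ E₁, (∃ b : BE, fc b ∈ F₁ ∧ bs b = e) →
      l₁ e = ∑ b ∈ Finset.univ.filter (fun b : BE => fc b ∈ F₁ ∧ bs b = e),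
        et₁ (fc b) * l₁ (br b))
    (hBdw₂ : ∀ e ∈ E₂, (∃ b : BE, fc b ∈ F₂ ∧ bs b = e) →
      l₂ e = ∑ b ∈ Finset.univ.filter (fun b : BE => fc b ∈ F₂ ∧ bs b = e),
        et₂ (fc b) * l₂ (br b))
    -- compatibility λᵢ(e) = λ̃ᵢ(e)·gᵢ(r(e)) on Bᵢ:
    (hcomp₁ : ∀ e ∈ E₁, l₁ e = lt₁ e * g₁ (rng e))
    (hcomp₂ : ∀ e ∈ E₂, l₂ e = lt₂ e * g₂ (rng e))
    -- the spliced vertex function g and skeleton edge function λ̃: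
    (g : V → ℝ) (lamt lam : Ed → ℝ) (etah : BE → ℝ)
    (hg : ∀ v : V, g v =
      if v ∈ V₁ ∧ v ∈ V₂ then g₁ v + g₂ v
      else if v ∈ V₁ then g₁ v else g₂ v)
    (hlamt : ∀ e : Ed, lamt e =
      if e ∈ E₁ ∧ e ∈ E₂ then
        (lt₁ e * g₁ (rng e) + lt₂ e * g₂ (rng e)) / (g₁ (rng e) + g₂ (rng e))
      else if e ∈ E₁ then
        (if rng e ∈ V₂ then lt₁ e * g₁ (rng e) / (g₁ (rng e) + g₂ (rng e)) else lt₁ e)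
      else
        (if rng e ∈ V₁ then lt₂ e * g₂ (rng e) / (g₁ (rng e) + g₂ (rng e)) else lt₂ e))
    -- the spliced boundary-graph vertex function λ:
    (hlam : ∀ e : Ed, lam e =
      if e ∈ E₁ ∧ e ∈ E₂ then l₁ e + l₂ e
      else if e ∈ E₁ then l₁ e else l₂ e)
    -- the spliced boundary-graph edge weight η̂:
    (hetah : ∀ b : BE, etah b =
      if fc b ∈ F₁ ∧ fc b ∈ F₂ then
        (et₁ (fc b) * l₁ (br b) + et₂ (fc b) * l₂ (br b)) / (l₁ (br b) + l₂ (br b))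
      else if fc b ∈ F₁ then
        (if br b ∈ E₂ then et₁ (fc b) * l₁ (br b) / (l₁ (br b) + l₂ (br b))
          else et₁ (fc b))
      else
        (if br b ∈ E₁ then et₂ (fc b) * l₂ (br b) / (l₁ (br b) + l₂ (br b))
          else et₂ (fc b))) :
    -- (g, λ̃) is a faithful graph weight on the 1-skeleton of B:
    ((∀ v : V, 0 < g v) ∧ (∀ e : Ed, 0 < lamt e) ∧
      ∀ v : V, (∃ e : Ed, s e = v) →
        g v = ∑ e ∈ Finset.univ.filter (fun e : Ed => s e = v), lamt e * g (rng e)) ∧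
    -- (λ, η̂) is a faithful graph weight on the boundary graph B_∂:
    ((∀ e : Ed, 0 < lam e) ∧ (∀ b : BE, 0 < etah b) ∧
      ∀ e : Ed, (∃ b : BE, bs b = e) →
        lam e = ∑ b ∈ Finset.univ.filter (fun b : BE => bs b = e), etah b * lam (br b)) ∧
    -- compatibility on all of B:
    (∀ e : Ed, lam e = lamt e * g (rng e)) := by
  -- positivity of g
  have hgpos : ∀ v : V, 0 < g v := by
    intro v
    rw [hg v]
    rcases hVcover v with hv | hv
    · by_cases hv2 : v ∈ V₂
      · simp only [hv, hv2, and_self, if_true]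
        exact add_pos (hg₁pos v hv) (hg₂pos v hv2)
      · simp only [hv, hv2, and_false, if_false, if_true]
        exact hg₁pos v hv
    · by_cases hv1 : v ∈ V₁
      · simp only [hv, hv1, and_self, if_true]
        exact add_pos (hg₁pos v hv1) (hg₂pos v hv)
      · simp only [hv, hv1, false_and, if_false]
        exact hg₂pos v hv
  -- positivity of lam
  have hlampos : ∀ e : Ed, 0 < lam e := by
    intro e
    rw [hlam e]
    rcases hEcover e with he | he
    · by_cases he2 : e ∈ E₂
      · simp only [he, he2, and_self, if_true]
        exact add_pos (hl₁pos e he) (hl₂pos e he2)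
      · simp only [he, he2, and_false, if_false, if_true]
        exact hl₁pos e he
    · by_cases he1 : e ∈ E₁
      · simp only [he, he1, and_self, if_true]
        exact add_pos (hl₁pos e he1) (hl₂pos e he)
      · simp only [he, he1, false_and, if_false]
        exact hl₂pos e he
  -- key identity for the skeleton
  have key1 : ∀ e : Ed, lamt e * g (rng e) =
      (if e ∈ E₁ then lt₁ e * g₁ (rng e) else 0) +
      (if e ∈ E₂ then lt₂ e * g₂ (rng e) else 0) := by
    intro e
    rw [hlamt e, hg (rng e)]
    by_cases h1 : e ∈ E₁ <;> by_cases h2 : e ∈ E₂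
    · have hv1 := hE₁r e h1; have hv2 := hE₂r e h2
      have hd : g₁ (rng e) + g₂ (rng e) ≠ 0 :=
        ne_of_gt (add_pos (hg₁pos _ hv1) (hg₂pos _ hv2))
      simp only [h1, h2, and_self, if_true, hv1, hv2]
      field_simp
    · have hv1 := hE₁r e h1
      simp only [h1, h2, and_false, if_false, if_true, hv1, true_and, add_zero]
      by_cases hv2 : rng e ∈ V₂
      · have hd : g₁ (rng e) + g₂ (rng e) ≠ 0 :=
          ne_of_gt (add_pos (hg₁pos _ hv1) (hg₂pos _ hv2))
        simp only [hv2, if_true]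
        field_simp
      · simp [hv2]
    · have hv2 := hE₂r e h2
      simp only [h1, h2, false_and, if_false, if_true, hv2, and_true, zero_add]
      by_cases hv1 : rng e ∈ V₁
      · have hd : g₁ (rng e) + g₂ (rng e) ≠ 0 :=
          ne_of_gt (add_pos (hg₁pos _ hv1) (hg₂pos _ hv2))
        simp only [hv1, if_true]
        field_simp
      · simp [hv1]
    · exact absurd (hEcover e) (by simp [h1, h2])
  -- key identity for the boundary graph
  have key2 : ∀ b : BE, etah b * lam (br b) =
      (if fc b ∈ F₁ then et₁ (fc b) * l₁ (br b) else 0) +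
      (if fc b ∈ F₂ then et₂ (fc b) * l₂ (br b) else 0) := by
    intro b
    rw [hetah b, hlam (br b)]
    by_cases h1 : fc b ∈ F₁ <;> by_cases h2 : fc b ∈ F₂
    · have he1 := (hF₁ b h1).2; have he2 := (hF₂ b h2).2
      have hd : l₁ (br b) + l₂ (br b) ≠ 0 :=
        ne_of_gt (add_pos (hl₁pos _ he1) (hl₂pos _ he2))
      simp only [h1, h2, and_self, if_true, he1, he2]
      field_simp
    · have he1 := (hF₁ b h1).2
      simp only [h1, h2, and_false, if_false, if_true, he1, true_and, add_zero]
      by_cases he2 : br b ∈ E₂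
      · have hd : l₁ (br b) + l₂ (br b) ≠ 0 :=
          ne_of_gt (add_pos (hl₁pos _ he1) (hl₂pos _ he2))
        simp only [he2, if_true]
        field_simp
      · simp [he2]
    · have he2 := (hF₂ b h2).2
      simp only [h1, h2, false_and, if_false, if_true, he2, and_true, zero_add]
      by_cases he1 : br b ∈ E₁
      · have hd : l₁ (br b) + l₂ (br b) ≠ 0 :=
          ne_of_gt (add_pos (hl₁pos _ he1) (hl₂pos _ he2))
        simp only [he1, if_true]
        field_simp
      · simp [he1]
    · exact absurd (hFcover (fc b)) (by simp [h1, h2])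
  refine ⟨⟨hgpos, ?_, ?_⟩, ⟨hlampos, ?_, ?_⟩, ?_⟩
  · -- positivity of lamt
    intro e
    have h0 : 0 < lamt e * g (rng e) := by
      rw [key1 e]
      rcases hEcover e with he | he
      · have t1 := mul_pos (hlt₁pos e he) (hg₁pos _ (hE₁r e he))
        by_cases he2 : e ∈ E₂
        · have t2 := mul_pos (hlt₂pos e he2) (hg₂pos _ (hE₂r e he2))
          simp only [he, he2, if_true]; positivity
        · simpa [he, he2] using t1
      · have t2 := mul_pos (hlt₂pos e he) (hg₂pos _ (hE₂r e he))
        by_cases he1 : e ∈ E₁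
        · have t1 := mul_pos (hlt₁pos e he1) (hg₁pos _ (hE₁r e he1))
          simp only [he, he1, if_true]; positivity
        · simpa [he, he1] using t2
    rcases mul_pos_iff.mp h0 with ⟨h, _⟩ | ⟨_, h⟩
    · exact h
    · exact absurd (hgpos (rng e)) (not_lt.mpr h.le)
  · -- weight equation for (g, lamt)
    rintro v ⟨e0, he0⟩
    have hsum : ∑ e ∈ Finset.univ.filter (fun e : Ed => s e = v), lamt e * g (rng e) =
        (∑ e ∈ E₁.filter (fun e => s e = v), lt₁ e * g₁ (rng e)) +
        (∑ e ∈ E₂.filter (fun e => s e = v), lt₂ e * g₂ (rng e)) := by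
      rw [Finset.sum_congr rfl (fun e _ => key1 e), Finset.sum_add_distrib]
      congr 1
      · rw [← Finset.sum_filter]
        apply Finset.sum_congr _ (fun _ _ => rfl)
        ext e; simp [Finset.mem_filter, and_comm]
      · rw [← Finset.sum_filter]
        apply Finset.sum_congr _ (fun _ _ => rfl)
        ext e; simp [Finset.mem_filter, and_comm]
    rw [hsum, hg v]
    have hS₁ : ¬ (∃ e ∈ E₁, s e = v) →
        ∑ e ∈ E₁.filter (fun e => s e = v), lt₁ e * g₁ (rng e) = 0 := by
      intro h
      apply Finset.sum_eq_zero
      intro e he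
      simp only [Finset.mem_filter] at he
      exact absurd ⟨e, he.1, he.2⟩ h
    have hS₂ : ¬ (∃ e ∈ E₂, s e = v) →
        ∑ e ∈ E₂.filter (fun e => s e = v), lt₂ e * g₂ (rng e) = 0 := by
      intro h
      apply Finset.sum_eq_zero
      intro e he
      simp only [Finset.mem_filter] at he
      exact absurd ⟨e, he.1, he.2⟩ h
    rcases hEcover e0 with h1 | h2
    · have hA : ∃ e ∈ E₁, s e = v := ⟨e0, h1, he0⟩
      have hv1 : v ∈ V₁ := he0 ▸ hE₁s e0 h1
      by_cases hv2 : v ∈ V₂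
      · have hB : ∃ e ∈ E₂, s e = v :=
          (hsink1 v (Finset.mem_inter.mpr ⟨hv1, hv2⟩)).mp hA
        rw [if_pos ⟨hv1, hv2⟩, ← hw₁ v hv1 hA, ← hw₂ v hv2 hB]
      · have hB : ¬ (∃ e ∈ E₂, s e = v) := by
          rintro ⟨e, he, hse⟩
          exact hv2 (hse ▸ hE₂s e he)
        simp only [hv1, hv2, and_false, if_false, if_true]
        rw [hS₂ hB, add_zero, ← hw₁ v hv1 hA]
    · have hB : ∃ e ∈ E₂, s e = v := ⟨e0, h2, he0⟩
      have hv2 : v ∈ V₂ := he0 ▸ hE₂s e0 h2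
      by_cases hv1 : v ∈ V₁
      · have hA : ∃ e ∈ E₁, s e = v :=
          (hsink1 v (Finset.mem_inter.mpr ⟨hv1, hv2⟩)).mpr hB
        rw [if_pos ⟨hv1, hv2⟩, ← hw₁ v hv1 hA, ← hw₂ v hv2 hB]
      · have hA : ¬ (∃ e ∈ E₁, s e = v) := by
          rintro ⟨e, he, hse⟩
          exact hv1 (hse ▸ hE₁s e he)
        simp only [hv1, hv2, false_and, if_false]
        rw [hS₁ hA, zero_add, ← hw₂ v hv2 hB]
  · -- positivity of etah
    intro b
    have h0 : 0 < etah b * lam (br b) := by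
      rw [key2 b]
      rcases hFcover (fc b) with hf | hf
      · have t1 := mul_pos (het₁pos _ hf) (hl₁pos _ (hF₁ b hf).2)
        by_cases hf2 : fc b ∈ F₂
        · have t2 := mul_pos (het₂pos _ hf2) (hl₂pos _ (hF₂ b hf2).2)
          simp only [hf, hf2, if_true]; positivity
        · simpa [hf, hf2] using t1
      · have t2 := mul_pos (het₂pos _ hf) (hl₂pos _ (hF₂ b hf).2)
        by_cases hf1 : fc b ∈ F₁
        · have t1 := mul_pos (het₁pos _ hf1) (hl₁pos _ (hF₁ b hf1).2)
          simp only [hf, hf1, if_true]; positivity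
        · simpa [hf, hf1] using t2
    rcases mul_pos_iff.mp h0 with ⟨h, _⟩ | ⟨_, h⟩
    · exact h
    · exact absurd (hlampos (br b)) (not_lt.mpr h.le)
  · -- weight equation for (lam, etah)
    rintro e ⟨b0, hb0⟩
    have hsum : ∑ b ∈ Finset.univ.filter (fun b : BE => bs b = e), etah b * lam (br b) =
        (∑ b ∈ Finset.univ.filter (fun b : BE => fc b ∈ F₁ ∧ bs b = e),
          et₁ (fc b) * l₁ (br b)) +
        (∑ b ∈ Finset.univ.filter (fun b : BE => fc b ∈ F₂ ∧ bs b = e),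
          et₂ (fc b) * l₂ (br b)) := by
      rw [Finset.sum_congr rfl (fun b _ => key2 b), Finset.sum_add_distrib]
      congr 1
      · rw [Finset.sum_filter, Finset.sum_filter]
        apply Finset.sum_congr rfl
        intro b _
        by_cases hb : bs b = e <;> by_cases hfb : fc b ∈ F₁ <;> simp [hb, hfb]
      · rw [Finset.sum_filter, Finset.sum_filter]
        apply Finset.sum_congr rfl
        intro b _
        by_cases hb : bs b = e <;> by_cases hfb : fc b ∈ F₂ <;> simp [hb, hfb]
    rw [hsum, hlam e]
    have hS₁ : ¬ (∃ b : BE, fc b ∈ F₁ ∧ bs b = e) →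
        ∑ b ∈ Finset.univ.filter (fun b : BE => fc b ∈ F₁ ∧ bs b = e),
          et₁ (fc b) * l₁ (br b) = 0 := by
      intro h
      apply Finset.sum_eq_zero
      intro b hb
      simp only [Finset.mem_filter] at hb
      exact absurd ⟨b, hb.2⟩ h
    have hS₂ : ¬ (∃ b : BE, fc b ∈ F₂ ∧ bs b = e) →
        ∑ b ∈ Finset.univ.filter (fun b : BE => fc b ∈ F₂ ∧ bs b = e),
          et₂ (fc b) * l₂ (br b) = 0 := by
      intro h
      apply Finset.sum_eq_zero
      intro b hb
      simp only [Finset.mem_filter] at hb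
      exact absurd ⟨b, hb.2⟩ h
    rcases hFcover (fc b0) with h1 | h2
    · have hA : ∃ b : BE, fc b ∈ F₁ ∧ bs b = e := ⟨b0, h1, hb0⟩
      have he1 : e ∈ E₁ := hb0 ▸ (hF₁ b0 h1).1
      by_cases he2 : e ∈ E₂
      · have hB : ∃ b : BE, fc b ∈ F₂ ∧ bs b = e :=
          (hsinkBd e (Finset.mem_inter.mpr ⟨he1, he2⟩)).mp hA
        rw [if_pos ⟨he1, he2⟩, ← hBdw₁ e he1 hA, ← hBdw₂ e he2 hB]
      · have hB : ¬ (∃ b : BE, fc b ∈ F₂ ∧ bs b = e) := by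
          rintro ⟨b, hb, hbe⟩
          exact he2 (hbe ▸ (hF₂ b hb).1)
        simp only [he1, he2, and_false, if_false, if_true]
        rw [hS₂ hB, add_zero, ← hBdw₁ e he1 hA]
    · have hB : ∃ b : BE, fc b ∈ F₂ ∧ bs b = e := ⟨b0, h2, hb0⟩
      have he2 : e ∈ E₂ := hb0 ▸ (hF₂ b0 h2).1
      by_cases he1 : e ∈ E₁
      · have hA : ∃ b : BE, fc b ∈ F₁ ∧ bs b = e :=
          (hsinkBd e (Finset.mem_inter.mpr ⟨he1, he2⟩)).mpr hB
        rw [if_pos ⟨he1, he2⟩, ← hBdw₁ e he1 hA, ← hBdw₂ e he2 hB]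
      · have hA : ¬ (∃ b : BE, fc b ∈ F₁ ∧ bs b = e) := by
          rintro ⟨b, hb, hbe⟩
          exact he1 (hbe ▸ (hF₁ b hb).1)
        simp only [he1, he2, false_and, if_false]
        rw [hS₁ hA, zero_add, ← hBdw₂ e he2 hB]
  · -- compatibility
    intro e
    rw [key1 e, hlam e]
    by_cases h1 : e ∈ E₁ <;> by_cases h2 : e ∈ E₂
    · simp only [h1, h2, and_self, if_true]
      rw [hcomp₁ e h1, hcomp₂ e h2]
    · simp only [h1, h2, and_false, if_false, if_true, add_zero]
      exact hcomp₁ e h1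
    · simp only [h1, h2, false_and, if_false, if_true, zero_add]
      exact hcomp₂ e h2
    · exact absurd (hEcover e) (by simp [h1, h2])
end
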